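/- Let n ≥ 1 and let G be an n×n positive semidefinite complex matrix whose diagonal entries are all strictly positive. Then ∑_{i=1}^{n} ((√G)_{ii})² ≥ ∑_{i=1}^{n} G_{ii}³ / (∑_{j=1}^{n} |G_{ij}|²). -/

import Mathlib

open Matrix
open scoped ComplexOrder

/-- The positive semidefinite square root of a positive semidefinite matrix
(the definition `Matrix.PosSemidef.sqrt` of the older Mathlib, since removed). -/
noncomputable def Matrix.PosSemidef.sqrt {n : Type*} [Fintype n] [DecidableEq n]
    {A : Matrix n n ℂ} (hA : A.PosSemidef) : Matrix n n ℂ :=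
  hA.1.eigenvectorUnitary.1 * diagonal ((↑) ∘ (√·) ∘ hA.1.eigenvalues) *
    (star hA.1.eigenvectorUnitary : Matrix n n ℂ)

lemma key_ineq {m : ℕ} (w v : Fin m → ℝ) (hw : ∀ t, 0 ≤ w t) (hv : ∀ t, 0 ≤ v t)
    (hb : 0 < ∑ t, w t * v t ^ 2) :
    (∑ t, w t * v t ^ 2) ^ 3 / (∑ t, w t * v t ^ 4) ≤ (∑ t, w t * v t) ^ 2 := by
  set a := ∑ t, w t * v t with ha
  set b := ∑ t, w t * v t ^ 2 with hbdef
  set c := ∑ t, w t * v t ^ 3 with hc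
  set d := ∑ t, w t * v t ^ 4 with hd
  have hterm : ∀ t, 0 ≤ w t * v t := fun t => mul_nonneg (hw t) (hv t)
  have ha0 : 0 ≤ a := Finset.sum_nonneg fun t _ => hterm t
  have hc0 : 0 ≤ c := Finset.sum_nonneg fun t _ => mul_nonneg (hw t) (pow_nonneg (hv t) 3)
  have hd0 : 0 ≤ d := Finset.sum_nonneg fun t _ => mul_nonneg (hw t) (pow_nonneg (hv t) 4)
  have cs1 : b ^ 2 ≤ a * c := by
    refine Finset.sum_sq_le_sum_mul_sum_of_sq_eq_mul Finset.univ
      (fun t _ => hterm t) (fun t _ => mul_nonneg (hw t) (pow_nonneg (hv t) 3)) fun t _ => by ring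
  have cs2 : c ^ 2 ≤ b * d := by
    refine Finset.sum_sq_le_sum_mul_sum_of_sq_eq_mul Finset.univ
      (fun t _ => mul_nonneg (hw t) (pow_nonneg (hv t) 2))
      (fun t _ => mul_nonneg (hw t) (pow_nonneg (hv t) 4)) fun t _ => by ring
  have hd1 : 0 < d := by
    obtain ⟨t, -, ht⟩ := Finset.exists_lt_of_sum_lt
      (show ∑ _t : Fin m, (0 : ℝ) < b by simpa using hb)
    have hwt : 0 < w t := by
      rcases (hw t).lt_or_eq with h | h
      · exact h
      · exfalso; rw [← h] at ht; simp at ht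
    have hvt : 0 < v t := by
      rcases (hv t).lt_or_eq with h | h
      · exact h
      · exfalso; rw [← h] at ht; simp at ht
    calc (0:ℝ) < w t * v t ^ 4 := by positivity
    _ ≤ d := Finset.single_le_sum (fun s _ => mul_nonneg (hw s) (pow_nonneg (hv s) 4))
        (Finset.mem_univ t)
  rw [div_le_iff₀ hd1]
  nlinarith [mul_le_mul cs1 cs1 (sq_nonneg b) (mul_nonneg ha0 hc0), sq_nonneg a,
    mul_le_mul_of_nonneg_left cs2 (mul_nonneg (mul_nonneg ha0 ha0) hb.le)]

lemma entry_re {n : ℕ} (V : Matrix (Fin n) (Fin n) ℂ) (f : Fin n → ℝ) (i : Fin n) :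
    ((V * diagonal (fun t => (f t : ℂ)) * Vᴴ) i i).re = ∑ t, ‖V i t‖ ^ 2 * f t := by
  rw [mul_apply, Complex.re_sum]
  refine Finset.sum_congr rfl fun t _ => ?_
  rw [mul_diagonal, conjTranspose_apply]
  have : V i t * (f t : ℂ) * star (V i t) = ((‖V i t‖ ^ 2 * f t : ℝ) : ℂ) := by
    rw [mul_comm (V i t), mul_assoc, RCLike.star_def, Complex.mul_conj]
    rw [Complex.normSq_eq_norm_sq]
    push_cast
    ring
  rw [this, Complex.ofReal_re]

lemma sandwich_mul {n : ℕ} (V : Matrix (Fin n) (Fin n) ℂ) (hV : Vᴴ * V = 1)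
    (d1 d2 : Fin n → ℂ) :
    (V * diagonal d1 * Vᴴ) * (V * diagonal d2 * Vᴴ)
      = V * diagonal (fun t => d1 t * d2 t) * Vᴴ := by
  rw [← diagonal_mul_diagonal]
  simp only [Matrix.mul_assoc]
  rw [← Matrix.mul_assoc Vᴴ V, hV, Matrix.one_mul]

lemma row_sq {n : ℕ} {G : Matrix (Fin n) (Fin n) ℂ} (hGh : G.IsHermitian) (i : Fin n) :
    ∑ j, ‖G i j‖ ^ 2 = ((G * G) i i).re := by
  rw [mul_apply, Complex.re_sum]
  refine Finset.sum_congr rfl fun j _ => ?_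
  have hji : G j i = star (G i j) := by
    conv_lhs => rw [← hGh]
    rw [conjTranspose_apply]
  rw [hji, RCLike.star_def, Complex.mul_conj, Complex.normSq_eq_norm_sq,
    Complex.ofReal_re]

theorem stmt_2 (n : ℕ) (hn : 1 ≤ n) (G : Matrix (Fin n) (Fin n) ℂ) (hG : G.PosSemidef)
    (hdiag : ∀ i, 0 < (G i i).re) :
    ∑ i, ((G i i).re) ^ 3 / (∑ j, ‖G i j‖ ^ 2) ≤ ∑ i, ((hG.sqrt i i).re) ^ 2 := by
  set V : Matrix (Fin n) (Fin n) ℂ := (hG.1.eigenvectorUnitary : Matrix (Fin n) (Fin n) ℂ)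
    with hVdef
  set e : Fin n → ℝ := hG.1.eigenvalues with hedef
  have he0 : ∀ t, 0 ≤ e t := fun t => hG.eigenvalues_nonneg t
  have hV : Vᴴ * V = 1 := by
    rw [← Matrix.star_eq_conjTranspose]
    exact Matrix.mem_unitaryGroup_iff'.mp hG.1.eigenvectorUnitary.2
  have hGspec : G = V * diagonal (fun t => ((e t : ℝ) : ℂ)) * Vᴴ := by
    conv_lhs => rw [hG.1.spectral_theorem]
    rfl
  have hSspec : hG.sqrt = V * diagonal (fun t => ((Real.sqrt (e t) : ℝ) : ℂ)) * Vᴴ := rfl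
  have hGG : G * G = V * diagonal (fun t => ((e t * e t : ℝ) : ℂ)) * Vᴴ := by
    conv_lhs => rw [hGspec]
    rw [sandwich_mul V hV]
    push_cast
    rfl
  refine Finset.sum_le_sum fun i _ => ?_
  have hGii : (G i i).re = ∑ t, ‖V i t‖ ^ 2 * e t := by rw [hGspec, entry_re]
  have hSii : (hG.sqrt i i).re = ∑ t, ‖V i t‖ ^ 2 * Real.sqrt (e t) := by rw [hSspec, entry_re]
  have hrow : ∑ j, ‖G i j‖ ^ 2 = ∑ t, ‖V i t‖ ^ 2 * (e t * e t) := by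
    rw [row_sq hG.1 i, hGG, entry_re]
  have h1 : (G i i).re = ∑ t, ‖V i t‖ ^ 2 * Real.sqrt (e t) ^ 2 := by
    rw [hGii]
    exact Finset.sum_congr rfl fun t _ => by rw [Real.sq_sqrt (he0 t)]
  have h2 : ∑ j, ‖G i j‖ ^ 2 = ∑ t, ‖V i t‖ ^ 2 * Real.sqrt (e t) ^ 4 := by
    rw [hrow]
    refine Finset.sum_congr rfl fun t _ => ?_
    rw [show Real.sqrt (e t) ^ 4 = (Real.sqrt (e t) ^ 2) * (Real.sqrt (e t) ^ 2) by ring,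
      Real.sq_sqrt (he0 t)]
  rw [h1, h2, hSii]
  exact key_ineq _ _ (fun t => by positivity) (fun t => Real.sqrt_nonneg _)
    (by rw [← h1]; exact hdiag i)
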